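/- Let Ã(y) be the 2×2 diagonal matrix with entries ã₁₁(y) = 1 − (1/2) sin(2πy₁) sin(2πy₂), ã₂₂(y) = 1 + (1/2) sin(2πy₁) sin(2πy₂), ã₁₂ = ã₂₁ = 0, and let ṽ¹¹(y) := −(sin(2πy₁) sin(2πy₂))/(16π²), ṽ²²(y) := +(sin(2πy₁) sin(2πy₂))/(16π²), ṽ¹² = ṽ²¹ := 0. For j,k,l ∈ {1,2} define c_j^{kl} := ∫_Y (Ã(y)e_j) · ∇ṽ^{kl}(y) dy, where e_j is the j-th standard basis vector and Y = [0,1]². Then c_j^{kl} = 0 for all j,k,l ∈ {1,2}; in particular Ã is a c-good matrix. -/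

import Mathlib

/-- Partial derivative w.r.t. the first variable. -/
noncomputable def p1 (f : ℝ → ℝ → ℝ) : ℝ → ℝ → ℝ := fun x y => deriv (fun t => f t y) x

/-- Partial derivative w.r.t. the second variable. -/
noncomputable def p2 (f : ℝ → ℝ → ℝ) : ℝ → ℝ → ℝ := fun x y => deriv (fun t => f x t) y

/-- Entry `ã₁₁` of the `c`-good matrix `Ã`. -/
noncomputable def at11 (y₁ y₂ : ℝ) : ℝ :=
  1 - (1/2) * Real.sin (2 * Real.pi * y₁) * Real.sin (2 * Real.pi * y₂)

/-- Entry `ã₂₂` of the `c`-good matrix `Ã`. -/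
noncomputable def at22 (y₁ y₂ : ℝ) : ℝ :=
  1 + (1/2) * Real.sin (2 * Real.pi * y₁) * Real.sin (2 * Real.pi * y₂)

/-- The diagonal entries `ã_{jj}` of `Ã`. -/
noncomputable def atdiag : Fin 2 → ℝ → ℝ → ℝ
  | 0 => at11
  | 1 => at22

/-- The `j`-th partial derivative operator. -/
noncomputable def pdd : Fin 2 → (ℝ → ℝ → ℝ) → ℝ → ℝ → ℝ
  | 0 => p1
  | 1 => p2

/-- The matrix `Ṽ = (ṽ^{kl})` of corrector functions for `Ã`. -/
noncomputable def vt : Fin 2 → Fin 2 → ℝ → ℝ → ℝ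
  | 0, 0 => fun y₁ y₂ =>
      -(Real.sin (2 * Real.pi * y₁) * Real.sin (2 * Real.pi * y₂)) / (16 * Real.pi ^ 2)
  | 1, 1 => fun y₁ y₂ =>
      (Real.sin (2 * Real.pi * y₁) * Real.sin (2 * Real.pi * y₂)) / (16 * Real.pi ^ 2)
  | _, _ => fun _ _ => 0

/-- The constants `c_j^{kl} = ∫_Y (Ã e_j)·∇ṽ^{kl}`; since `Ã` is diagonal the integrand is
`ã_{jj} ∂_j ṽ^{kl}` (the invariant measure of `Ã` is the constant 1, so no weight appears). -/
noncomputable def ct (j k l : Fin 2) : ℝ :=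
  ∫ y₁ in (0:ℝ)..1, ∫ y₂ in (0:ℝ)..1, atdiag j y₁ y₂ * pdd j (vt k l) y₁ y₂

section Helpers

private lemma hd2 (x : ℝ) : HasDerivAt (fun t : ℝ => 2*Real.pi*t) (2*Real.pi) x := by
  simpa using (hasDerivAt_id x).const_mul (2*Real.pi)

private lemma hds (x : ℝ) :
    HasDerivAt (fun t => Real.sin (2*Real.pi*t)) (2*Real.pi*Real.cos (2*Real.pi*x)) x := by
  have := (Real.hasDerivAt_sin (2*Real.pi*x)).comp x (hd2 x)
  refine this.congr_deriv (Eq.symm ?_)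
  ring

private lemma hdc (x : ℝ) :
    HasDerivAt (fun t => Real.cos (2*Real.pi*t)) (-(2*Real.pi*Real.sin (2*Real.pi*x))) x := by
  have := (Real.hasDerivAt_cos (2*Real.pi*x)).comp x (hd2 x)
  refine this.congr_deriv (Eq.symm ?_)
  ring

private lemma int_sin : ∫ x in (0:ℝ)..1, Real.sin (2*Real.pi*x) = 0 := by
  have h : ∀ x ∈ Set.uIcc (0:ℝ) 1,
      HasDerivAt (fun t => -Real.cos (2*Real.pi*t)/(2*Real.pi)) (Real.sin (2*Real.pi*x)) x := by
    intro x _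
    have h0 := ((hdc x).neg).div_const (2*Real.pi)
    refine h0.congr_deriv (Eq.symm ?_)
    field_simp
  rw [intervalIntegral.integral_eq_sub_of_hasDerivAt h
    ((Continuous.intervalIntegrable (by continuity) _ _))]
  simp [Real.cos_two_pi]

private lemma int_cos : ∫ x in (0:ℝ)..1, Real.cos (2*Real.pi*x) = 0 := by
  have h : ∀ x ∈ Set.uIcc (0:ℝ) 1,
      HasDerivAt (fun t => Real.sin (2*Real.pi*t)/(2*Real.pi)) (Real.cos (2*Real.pi*x)) x := by
    intro x _
    have h0 := (hds x).div_const (2*Real.pi)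
    refine h0.congr_deriv (Eq.symm ?_)
    field_simp
  rw [intervalIntegral.integral_eq_sub_of_hasDerivAt h
    ((Continuous.intervalIntegrable (by continuity) _ _))]
  simp [Real.sin_two_pi]

private lemma int_sin_sq : ∫ x in (0:ℝ)..1, Real.sin (2*Real.pi*x)^2 = 1/2 := by
  have h : ∀ x ∈ Set.uIcc (0:ℝ) 1,
      HasDerivAt (fun t => t/2 - Real.sin (2*Real.pi*t)*Real.cos (2*Real.pi*t)/(4*Real.pi))
        (Real.sin (2*Real.pi*x)^2) x := by
    intro x _
    have h0 := ((hasDerivAt_id x).div_const 2).sub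
      (((hds x).mul (hdc x)).div_const (4*Real.pi))
    refine h0.congr_deriv (Eq.symm ?_)
    have hsc := Real.sin_sq_add_cos_sq (2*Real.pi*x)
    have hπ : Real.pi ≠ 0 := Real.pi_ne_zero
    field_simp
    linear_combination 4 * hsc
  rw [intervalIntegral.integral_eq_sub_of_hasDerivAt h
    ((Continuous.intervalIntegrable (by continuity) _ _))]
  simp [Real.sin_two_pi]

private lemma int_sincos : ∫ x in (0:ℝ)..1, Real.sin (2*Real.pi*x)*Real.cos (2*Real.pi*x) = 0 := by
  have h : ∀ x ∈ Set.uIcc (0:ℝ) 1,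
      HasDerivAt (fun t => Real.sin (2*Real.pi*t)^2/(4*Real.pi))
        (Real.sin (2*Real.pi*x)*Real.cos (2*Real.pi*x)) x := by
    intro x _
    have h0 := ((hds x).pow 2).div_const (4*Real.pi)
    refine h0.congr_deriv (Eq.symm ?_)
    have hπ : Real.pi ≠ 0 := Real.pi_ne_zero
    field_simp
    ring
  rw [intervalIntegral.integral_eq_sub_of_hasDerivAt h
    ((Continuous.intervalIntegrable (by continuity) _ _))]
  simp [Real.sin_two_pi]

private lemma contSin : Continuous fun x : ℝ => Real.sin (2*Real.pi*x) := by continuity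
private lemma contCos : Continuous fun x : ℝ => Real.cos (2*Real.pi*x) := by continuity

/-- Inner integral for the `j = 0` case. -/
private lemma inner_j0 (a b y₁ : ℝ) :
    (∫ y₂ in (0:ℝ)..1,
      (1 + a*Real.sin (2*Real.pi*y₁)*Real.sin (2*Real.pi*y₂)) *
        (b*Real.cos (2*Real.pi*y₁)*Real.sin (2*Real.pi*y₂)))
    = (a*b/2) * (Real.sin (2*Real.pi*y₁)*Real.cos (2*Real.pi*y₁)) := by
  have hfun : (fun y₂ => (1 + a*Real.sin (2*Real.pi*y₁)*Real.sin (2*Real.pi*y₂)) *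
        (b*Real.cos (2*Real.pi*y₁)*Real.sin (2*Real.pi*y₂)))
      = fun y₂ => (b*Real.cos (2*Real.pi*y₁)) * Real.sin (2*Real.pi*y₂)
        + (a*b*Real.sin (2*Real.pi*y₁)*Real.cos (2*Real.pi*y₁)) * Real.sin (2*Real.pi*y₂)^2 := by
    funext y₂; ring
  rw [hfun, intervalIntegral.integral_add
      (f := fun y₂ => (b*Real.cos (2*Real.pi*y₁)) * Real.sin (2*Real.pi*y₂))
      (g := fun y₂ => (a*b*Real.sin (2*Real.pi*y₁)*Real.cos (2*Real.pi*y₁)) * Real.sin (2*Real.pi*y₂)^2)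
      ((continuous_const.mul contSin).intervalIntegrable _ _)
      ((continuous_const.mul (contSin.pow 2)).intervalIntegrable _ _),
    intervalIntegral.integral_const_mul, intervalIntegral.integral_const_mul,
    int_sin, int_sin_sq]
  ring

/-- Inner integral for the `j = 1` case. -/
private lemma inner_j1 (a b y₁ : ℝ) :
    (∫ y₂ in (0:ℝ)..1,
      (1 + a*Real.sin (2*Real.pi*y₁)*Real.sin (2*Real.pi*y₂)) *
        (b*Real.sin (2*Real.pi*y₁)*Real.cos (2*Real.pi*y₂)))
    = 0 := by
  have hfun : (fun y₂ => (1 + a*Real.sin (2*Real.pi*y₁)*Real.sin (2*Real.pi*y₂)) *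
        (b*Real.sin (2*Real.pi*y₁)*Real.cos (2*Real.pi*y₂)))
      = fun y₂ => (b*Real.sin (2*Real.pi*y₁)) * Real.cos (2*Real.pi*y₂)
        + (a*b*Real.sin (2*Real.pi*y₁)^2) * (Real.sin (2*Real.pi*y₂)*Real.cos (2*Real.pi*y₂)) := by
    funext y₂; ring
  rw [hfun, intervalIntegral.integral_add
      (f := fun y₂ => (b*Real.sin (2*Real.pi*y₁)) * Real.cos (2*Real.pi*y₂))
      (g := fun y₂ => (a*b*Real.sin (2*Real.pi*y₁)^2) * (Real.sin (2*Real.pi*y₂)*Real.cos (2*Real.pi*y₂)))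
      ((continuous_const.mul contCos).intervalIntegrable _ _)
      ((continuous_const.mul (contSin.mul contCos)).intervalIntegrable _ _),
    intervalIntegral.integral_const_mul, intervalIntegral.integral_const_mul,
    int_cos, int_sincos]
  ring

private lemma main0 (a b : ℝ) :
    (∫ y₁ in (0:ℝ)..1, ∫ y₂ in (0:ℝ)..1,
      (1 + a*Real.sin (2*Real.pi*y₁)*Real.sin (2*Real.pi*y₂)) *
        (b*Real.cos (2*Real.pi*y₁)*Real.sin (2*Real.pi*y₂))) = 0 := by
  simp_rw [inner_j0]
  rw [intervalIntegral.integral_const_mul, int_sincos, mul_zero]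

private lemma main1 (a b : ℝ) :
    (∫ y₁ in (0:ℝ)..1, ∫ y₂ in (0:ℝ)..1,
      (1 + a*Real.sin (2*Real.pi*y₁)*Real.sin (2*Real.pi*y₂)) *
        (b*Real.sin (2*Real.pi*y₁)*Real.cos (2*Real.pi*y₂))) = 0 := by
  simp_rw [inner_j1]
  simp

private lemma d1_vt00 (y₁ y₂ : ℝ) :
    deriv (fun t => -(Real.sin (2 * Real.pi * t) * Real.sin (2 * Real.pi * y₂)) / (16 * Real.pi ^ 2)) y₁
      = -(2*Real.pi*Real.cos (2*Real.pi*y₁)*Real.sin (2*Real.pi*y₂))/(16*Real.pi^2) := by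
  have h := (((hds y₁).mul_const (Real.sin (2*Real.pi*y₂))).neg).div_const (16*Real.pi^2)
  exact h.deriv

private lemma d2_vt00 (y₁ y₂ : ℝ) :
    deriv (fun t => -(Real.sin (2 * Real.pi * y₁) * Real.sin (2 * Real.pi * t)) / (16 * Real.pi ^ 2)) y₂
      = -(Real.sin (2*Real.pi*y₁)*(2*Real.pi*Real.cos (2*Real.pi*y₂)))/(16*Real.pi^2) := by
  have h := (((hds y₂).const_mul (Real.sin (2*Real.pi*y₁))).neg).div_const (16*Real.pi^2)
  exact h.deriv

private lemma d1_vt11 (y₁ y₂ : ℝ) :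
    deriv (fun t => (Real.sin (2 * Real.pi * t) * Real.sin (2 * Real.pi * y₂)) / (16 * Real.pi ^ 2)) y₁
      = (2*Real.pi*Real.cos (2*Real.pi*y₁)*Real.sin (2*Real.pi*y₂))/(16*Real.pi^2) := by
  have h := ((hds y₁).mul_const (Real.sin (2*Real.pi*y₂))).div_const (16*Real.pi^2)
  exact h.deriv

private lemma d2_vt11 (y₁ y₂ : ℝ) :
    deriv (fun t => (Real.sin (2 * Real.pi * y₁) * Real.sin (2 * Real.pi * t)) / (16 * Real.pi ^ 2)) y₂
      = (Real.sin (2*Real.pi*y₁)*(2*Real.pi*Real.cos (2*Real.pi*y₂)))/(16*Real.pi^2) := by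
  have h := ((hds y₂).const_mul (Real.sin (2*Real.pi*y₁))).div_const (16*Real.pi^2)
  exact h.deriv

end Helpers

/-- All the constants `c_j^{kl}` of `Ã` vanish; in particular `Ã` is a `c`-good matrix. -/
theorem explicit_c_good_matrix : ∀ j k l : Fin 2, ct j k l = 0 := by
  have case000 : ct 0 0 0 = 0 := by
    have hpt : ∀ y₁ y₂ : ℝ, atdiag 0 y₁ y₂ * pdd 0 (vt 0 0) y₁ y₂
        = (1 + (-(1/2))*Real.sin (2*Real.pi*y₁)*Real.sin (2*Real.pi*y₂)) *
          ((-(2*Real.pi)/(16*Real.pi^2))*Real.cos (2*Real.pi*y₁)*Real.sin (2*Real.pi*y₂)) := by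
      intro y₁ y₂
      show at11 y₁ y₂ * p1 (vt 0 0) y₁ y₂ = _
      have hd : p1 (vt 0 0) y₁ y₂
          = -(2*Real.pi*Real.cos (2*Real.pi*y₁)*Real.sin (2*Real.pi*y₂))/(16*Real.pi^2) :=
        d1_vt00 y₁ y₂
      rw [hd]
      unfold at11
      ring
    unfold ct
    simp_rw [hpt]
    exact main0 _ _
  have case100 : ct 1 0 0 = 0 := by
    have hpt : ∀ y₁ y₂ : ℝ, atdiag 1 y₁ y₂ * pdd 1 (vt 0 0) y₁ y₂
        = (1 + ((1/2))*Real.sin (2*Real.pi*y₁)*Real.sin (2*Real.pi*y₂)) *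
          ((-(2*Real.pi)/(16*Real.pi^2))*Real.sin (2*Real.pi*y₁)*Real.cos (2*Real.pi*y₂)) := by
      intro y₁ y₂
      show at22 y₁ y₂ * p2 (vt 0 0) y₁ y₂ = _
      have hd : p2 (vt 0 0) y₁ y₂
          = -(Real.sin (2*Real.pi*y₁)*(2*Real.pi*Real.cos (2*Real.pi*y₂)))/(16*Real.pi^2) :=
        d2_vt00 y₁ y₂
      rw [hd]
      unfold at22
      ring
    unfold ct
    simp_rw [hpt]
    exact main1 _ _
  have case011 : ct 0 1 1 = 0 := by
    have hpt : ∀ y₁ y₂ : ℝ, atdiag 0 y₁ y₂ * pdd 0 (vt 1 1) y₁ y₂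
        = (1 + (-(1/2))*Real.sin (2*Real.pi*y₁)*Real.sin (2*Real.pi*y₂)) *
          (((2*Real.pi)/(16*Real.pi^2))*Real.cos (2*Real.pi*y₁)*Real.sin (2*Real.pi*y₂)) := by
      intro y₁ y₂
      show at11 y₁ y₂ * p1 (vt 1 1) y₁ y₂ = _
      have hd : p1 (vt 1 1) y₁ y₂
          = (2*Real.pi*Real.cos (2*Real.pi*y₁)*Real.sin (2*Real.pi*y₂))/(16*Real.pi^2) :=
        d1_vt11 y₁ y₂
      rw [hd]
      unfold at11
      ring
    unfold ct
    simp_rw [hpt]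
    exact main0 _ _
  have case111 : ct 1 1 1 = 0 := by
    have hpt : ∀ y₁ y₂ : ℝ, atdiag 1 y₁ y₂ * pdd 1 (vt 1 1) y₁ y₂
        = (1 + ((1/2))*Real.sin (2*Real.pi*y₁)*Real.sin (2*Real.pi*y₂)) *
          (((2*Real.pi)/(16*Real.pi^2))*Real.sin (2*Real.pi*y₁)*Real.cos (2*Real.pi*y₂)) := by
      intro y₁ y₂
      show at22 y₁ y₂ * p2 (vt 1 1) y₁ y₂ = _
      have hd : p2 (vt 1 1) y₁ y₂
          = (Real.sin (2*Real.pi*y₁)*(2*Real.pi*Real.cos (2*Real.pi*y₂)))/(16*Real.pi^2) :=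
        d2_vt11 y₁ y₂
      rw [hd]
      unfold at22
      ring
    unfold ct
    simp_rw [hpt]
    exact main1 _ _
  have casez : ∀ j : Fin 2, ∀ k l : Fin 2, vt k l = (fun _ _ => 0) → ct j k l = 0 := by
    intro j k l hv
    unfold ct
    rw [hv]
    fin_cases j <;> simp [pdd, p1, p2]
  intro j k l
  fin_cases j <;> fin_cases k <;> fin_cases l
  · exact case000
  · exact casez 0 0 1 rfl
  · exact casez 0 1 0 rfl
  · exact case011
  · exact case100
  · exact casez 1 0 1 rfl
  · exact casez 1 1 0 rfl
  · exact case111
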